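/- For any skew polynomial f ∈ OPol_n, the relation ∂_{w_0} f ∂_{w_0} = ∂_{w_0}(f) ∂_{w_0} holds in the odd nilHecke algebra ONH_n, where on the left f and ∂_{w_0} are multiplied as operators and on the right ∂_{w_0}(f) denotes the result of applying the longest odd divided difference operator to f. -/

import Mathlib

/-- The (0-indexed) word `∂_1(∂_2∂_1)⋯(∂_{n−1}⋯∂_1)` of simple indices defining
the longest element `w_0`. -/
def w0List : ℕ → List ℕ
  | 0 => []
  | n + 1 => w0List n ++ (List.range n).reverse

/-- Composite of a list of operators, leftmost applied last. -/
def opProd {A : Type*} (l : List (A → A)) : A → A := l.foldr (· ∘ ·) id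

/-- In the odd nilHecke algebra `ONH_n` (presented abstractly by
odd generators `x i`, `D i` and the odd nilHecke relations), for every skew
polynomial `f` (an element of the subring generated by the `x i`) one has
`∂_{w_0} · f · ∂_{w_0} = ∂_{w_0}(f) · ∂_{w_0}`, where on the left `f` and the
element `∂_{w_0} = D`-word are multiplied in `ONH_n` and on the right
`∂_{w_0}(f)` is the result of applying the longest odd divided difference
operator (the composite of the operators `δ i`) to `f`. -/
theorem stmt6 {A : Type*} [Ring A] (n : ℕ) (x D : ℕ → A)
    (hxx : ∀ i j, i < n → j < n → i ≠ j → x i * x j = -(x j * x i))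
    (hDDdist : ∀ i j, i + 1 < n → j + 1 < n → (i + 1 < j ∨ j + 1 < i) →
      D i * D j = -(D j * D i))
    (hD2 : ∀ i, i + 1 < n → D i * D i = 0)
    (hbraid : ∀ i, i + 2 < n → D i * D (i + 1) * D i = D (i + 1) * D i * D (i + 1))
    (hDx : ∀ i j, i + 1 < n → j < n → j ≠ i → j ≠ i + 1 → D i * x j = -(x j * D i))
    (hmixa : ∀ i, i + 1 < n → x i * D i + D i * x (i + 1) = 1)
    (hmixb : ∀ i, i + 1 < n → D i * x i + x (i + 1) * D i = 1)
    (σ : ℕ → A →+* A)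
    (hσx : ∀ i j, i + 1 < n → j < n →
      σ i (x j) = -x (if j = i then i + 1 else if j = i + 1 then i else j))
    (δ : ℕ → A → A)
    (hδ_add : ∀ i, i + 1 < n → ∀ a b, δ i (a + b) = δ i a + δ i b)
    (hδx : ∀ i j, i + 1 < n → j < n →
      δ i (x j) = if j = i ∨ j = i + 1 then 1 else 0)
    (hδ_leib : ∀ i, i + 1 < n → ∀ a b, δ i (a * b) = δ i a * b + σ i a * δ i b) :
    ∀ f ∈ Subring.closure (x '' Set.Iio n),
      ((w0List n).map D).prod * f * ((w0List n).map D).prod =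
        opProd ((w0List n).map δ) f * ((w0List n).map D).prod := by
  set S := Subring.closure (x '' Set.Iio n) with hSdef
  have hcent : ∀ (k : ℕ) (y : A), (-1 : A) ^ k * y = y * (-1 : A) ^ k :=
    fun k y => ((Commute.neg_one_left y).pow_left k).eq
  have hpull : ∀ (k : ℕ) (a b : A), a * ((-1 : A) ^ k * b) = (-1 : A) ^ k * (a * b) := by
    intro k a b
    rw [← mul_assoc, ← hcent, mul_assoc]
  -- elements of w0List m are small
  have hw0 : ∀ m, ∀ a ∈ w0List m, a + 1 < m := by
    intro m
    induction m with
    | zero => simp [w0List]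
    | succ m ih =>
      intro a ha
      simp only [w0List, List.mem_append, List.mem_reverse, List.mem_range] at ha
      rcases ha with h | h
      · exact lt_trans (ih a h) (Nat.lt_succ_self m)
      · omega
  -- sign-commuting past a distant list
  have hC : ∀ j, j + 1 < n → ∀ l : List ℕ, (∀ a ∈ l, a + 1 < j) →
      D j * (l.map D).prod = (-1 : A) ^ l.length * ((l.map D).prod * D j) := by
    intro j hj l
    induction l with
    | nil => simp
    | cons a l ih =>
      intro hl
      have ha : a + 1 < j := hl a List.mem_cons_self
      have han : a + 1 < n := by omega
      have hcomm : D j * D a = -(D a * D j) :=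
        hDDdist j a hj han (Or.inr ha)
      have ihl := ih (fun b hb => hl b (List.mem_cons_of_mem a hb))
      calc D j * ((List.map D (a :: l)).prod)
          = (D j * D a) * (l.map D).prod := by
            simp only [List.map_cons, List.prod_cons, mul_assoc]
        _ = -(D a * (D j * (l.map D).prod)) := by rw [hcomm]; simp [mul_assoc]
        _ = -(D a * ((-1 : A) ^ l.length * ((l.map D).prod * D j))) := by rw [ihl]
        _ = (-1 : A) ^ (l.length + 1) * ((List.map D (a :: l)).prod * D j) := by
            simp only [List.map_cons, List.prod_cons, List.length_cons, pow_succ, hpull,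
              mul_assoc, mul_neg, mul_one, neg_mul, neg_neg]
  have hCrev : ∀ j, j + 1 < n → ∀ l : List ℕ, (∀ a ∈ l, a + 1 < j) →
      (l.map D).prod * D j = (-1 : A) ^ l.length * (D j * (l.map D).prod) := by
    intro j hj l hl
    have h := hC j hj l hl
    have hsq : ((-1 : A) ^ l.length) * ((-1 : A) ^ l.length) = 1 := by
      rw [← pow_add]
      exact Even.neg_one_pow ⟨l.length, rfl⟩
    calc (l.map D).prod * D j
        = ((-1 : A) ^ l.length * (-1 : A) ^ l.length) * ((l.map D).prod * D j) := by
          rw [hsq, one_mul]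
      _ = (-1 : A) ^ l.length * (D j * (l.map D).prod) := by
          rw [mul_assoc, ← h]
  -- descending word squared is zero
  have hdesc : ∀ m : ℕ, (List.range (m + 1)).reverse = m :: (List.range m).reverse := by
    intro m; rw [List.range_succ, List.reverse_append]; simp
  have hB : ∀ m, 0 < m → m < n →
      (((List.range m).reverse.map D).prod) * (((List.range m).reverse.map D).prod) = 0 := by
    intro m
    induction m with
    | zero => omega
    | succ k ihk =>
      intro _ hkn
      match k, ihk with
      | 0, _ =>
        rw [hdesc 0]
        simp only [List.map_cons, List.prod_cons, List.range_zero, List.reverse_nil,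
          List.map_nil, List.prod_nil, mul_one]
        exact hD2 0 hkn
      | (j + 1), ihk =>
        -- m = j + 2
        set Q := (((List.range j).reverse.map D).prod) with hQ
        have hQj1 : (((List.range (j+1)).reverse.map D).prod) = D j * Q := by
          rw [hdesc j]; simp only [List.map_cons, List.prod_cons]; rfl
        have hQj2 : (((List.range (j+2)).reverse.map D).prod) = D (j+1) * (D j * Q) := by
          rw [hdesc (j+1), List.map_cons, List.prod_cons, hQj1]
        have hsmall : ∀ a ∈ (List.range j).reverse, a + 1 < j + 1 := by
          intro a ha; simp only [List.mem_reverse, List.mem_range] at ha; omega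
        have hjn : j + 1 + 1 < n := hkn
        have hrev := hCrev (j + 1) hjn (List.range j).reverse hsmall
        have hbr := hbraid j (by omega)
        rw [hQj2]
        calc D (j+1) * (D j * Q) * (D (j+1) * (D j * Q))
            = D (j+1) * (D j * ((Q * D (j+1)) * (D j * Q))) := by
              simp only [mul_assoc]
          _ = D (j+1) * (D j * (((-1:A) ^ (List.range j).reverse.length * (D (j+1) * Q))
                * (D j * Q))) := by rw [hrev]
          _ = (-1:A) ^ (List.range j).reverse.length *
                (D (j+1) * D j * D (j+1) * (Q * (D j * Q))) := by
              simp only [mul_assoc, hpull]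
          _ = (-1:A) ^ (List.range j).reverse.length *
                (D j * D (j+1) * D j * (Q * (D j * Q))) := by rw [hbr]
          _ = (-1:A) ^ (List.range j).reverse.length *
                (D j * (D (j+1) * ((D j * Q) * (D j * Q)))) := by
              simp only [mul_assoc]
          _ = 0 := by
              rw [← hQj1, ihk (by omega) (by omega)]
              simp
  -- D j kills the w0 word
  have hA : ∀ m, m ≤ n → ∀ j, j + 1 < m → D j * ((w0List m).map D).prod = 0 := by
    intro m
    induction m with
    | zero => omega
    | succ m ih =>
      intro hmn j hj
      have hsplit : ((w0List (m+1)).map D).prod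
          = ((w0List m).map D).prod * (((List.range m).reverse.map D).prod) := by
        rw [show w0List (m+1) = w0List m ++ (List.range m).reverse from rfl,
          List.map_append, List.prod_append]
      rw [hsplit]
      rcases Nat.lt_or_ge (j + 1) m with h | h
      · rw [← mul_assoc, ih (by omega) j h, zero_mul]
      · -- j + 1 = m
        have hjm : j + 1 = m := by omega
        subst hjm
        have hsplit2 : ((w0List (j+1)).map D).prod
            = ((w0List j).map D).prod * (((List.range j).reverse.map D).prod) := by
          rw [show w0List (j+1) = w0List j ++ (List.range j).reverse from rfl,
            List.map_append, List.prod_append]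
        have hQj1 : (((List.range (j+1)).reverse.map D).prod)
            = D j * (((List.range j).reverse.map D).prod) := by
          rw [hdesc j]; simp only [List.map_cons, List.prod_cons]
        have hjn : j + 1 < n := by omega
        have hCj := hC j hjn (w0List j) (fun a ha => hw0 j a ha)
        calc D j * (((w0List (j+1)).map D).prod * (((List.range (j+1)).reverse.map D).prod))
            = (D j * ((w0List j).map D).prod) *
                ((((List.range j).reverse.map D).prod) * (((List.range (j+1)).reverse.map D).prod)) := by
              rw [hsplit2]; simp only [mul_assoc]
          _ = ((-1:A) ^ (w0List j).length * (((w0List j).map D).prod * D j)) *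
                ((((List.range j).reverse.map D).prod) * (((List.range (j+1)).reverse.map D).prod)) := by
              rw [hCj]
          _ = (-1:A) ^ (w0List j).length * (((w0List j).map D).prod *
                ((((List.range (j+1)).reverse.map D).prod) * (((List.range (j+1)).reverse.map D).prod))) := by
              rw [hQj1]; simp only [mul_assoc]
          _ = 0 := by rw [hB (j+1) (by omega) (by omega)]; simp
  -- sigma preserves S
  have hσS : ∀ i, i + 1 < n → ∀ f ∈ S, σ i f ∈ S := by
    intro i hi f hf
    induction hf using Subring.closure_induction with
    | mem a ha =>
      obtain ⟨j, hj, rfl⟩ := ha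
      simp only [Set.mem_Iio] at hj
      rw [hσx i j hi hj]
      apply neg_mem
      apply Subring.subset_closure
      apply Set.mem_image_of_mem
      simp only [Set.mem_Iio]
      split
      · omega
      · split <;> omega
    | zero => rw [map_zero]; exact zero_mem S
    | one => rw [map_one]; exact one_mem S
    | add a b _ _ ha hb => rw [map_add]; exact add_mem ha hb
    | neg a _ ha => rw [map_neg]; exact neg_mem ha
    | mul a b _ _ ha hb => rw [map_mul]; exact mul_mem ha hb
  have hδ0 : ∀ i, i + 1 < n → δ i 0 = 0 := by
    intro i hi
    have h := hδ_add i hi 0 0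
    rw [add_zero] at h
    nth_rewrite 1 [← add_zero (δ i 0)] at h
    exact (add_left_cancel h).symm
  have hδ1 : ∀ i, i + 1 < n → δ i 1 = 0 := by
    intro i hi
    have h := hδ_leib i hi 1 1
    rw [mul_one, map_one, one_mul, mul_one] at h
    nth_rewrite 1 [← add_zero (δ i 1)] at h
    exact (add_left_cancel h).symm
  -- key commutation: D i * f = δ i f + σ i f * D i, and δ i f ∈ S
  have hkey : ∀ i, i + 1 < n → ∀ f, ∀ hf : f ∈ S,
      δ i f ∈ S ∧ D i * f = δ i f + σ i f * D i := by
    intro i hi f hf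
    induction hf using Subring.closure_induction with
    | mem a ha =>
      obtain ⟨j, hj, rfl⟩ := ha
      simp only [Set.mem_Iio] at hj
      constructor
      · rw [hδx i j hi hj]
        split
        · exact one_mem S
        · exact zero_mem S
      · rw [hδx i j hi hj, hσx i j hi hj]
        by_cases h1 : j = i
        · subst h1
          rw [if_pos (Or.inl rfl), if_pos rfl, neg_mul]
          exact (eq_sub_of_add_eq (hmixb j hi)).trans (sub_eq_add_neg _ _)
        · by_cases h2 : j = i + 1
          · subst h2
            rw [if_pos (Or.inr rfl), if_neg h1, if_pos rfl, neg_mul]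
            exact (eq_sub_of_add_eq' (hmixa i hi)).trans (sub_eq_add_neg _ _)
          · rw [if_neg (by tauto : ¬(j = i ∨ j = i + 1)), if_neg h1, if_neg h2,
              hDx i j hi hj h1 h2, neg_mul, zero_add]
    | zero =>
      refine ⟨by rw [hδ0 i hi]; exact zero_mem S, ?_⟩
      rw [hδ0 i hi, map_zero, mul_zero, zero_mul, add_zero]
    | one =>
      refine ⟨by rw [hδ1 i hi]; exact zero_mem S, ?_⟩
      rw [hδ1 i hi, map_one, mul_one, one_mul, zero_add]
    | add a b ha hb iha ihb =>
      obtain ⟨ha1, ha2⟩ := iha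
      obtain ⟨hb1, hb2⟩ := ihb
      constructor
      · rw [hδ_add i hi]; exact add_mem ha1 hb1
      · rw [mul_add, ha2, hb2, hδ_add i hi, map_add, add_mul]
        abel
    | neg a ha iha =>
      obtain ⟨ha1, ha2⟩ := iha
      have hneg : δ i (-a) = -δ i a := by
        have h := hδ_add i hi a (-a)
        rw [add_neg_cancel, hδ0 i hi] at h
        exact eq_neg_of_add_eq_zero_right h.symm
      constructor
      · rw [hneg]; exact neg_mem ha1
      · rw [mul_neg, ha2, hneg, map_neg, neg_mul, neg_add]
    | mul a b ha hb iha ihb =>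
      obtain ⟨ha1, ha2⟩ := iha
      obtain ⟨hb1, hb2⟩ := ihb
      have hσa : σ i a ∈ S := hσS i hi a ha
      constructor
      · rw [hδ_leib i hi]
        exact add_mem (mul_mem ha1 hb) (mul_mem hσa hb1)
      · calc D i * (a * b) = (D i * a) * b := by rw [mul_assoc]
          _ = (δ i a + σ i a * D i) * b := by rw [ha2]
          _ = δ i a * b + σ i a * (D i * b) := by rw [add_mul, mul_assoc]
          _ = δ i a * b + σ i a * (δ i b + σ i b * D i) := by rw [hb2]
          _ = (δ i a * b + σ i a * δ i b) + (σ i a * σ i b) * D i := by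
              rw [mul_add]; simp only [mul_assoc]; abel
          _ = δ i (a * b) + σ i (a * b) * D i := by rw [hδ_leib i hi, map_mul]
  -- the left ideal generated by the D's
  set I : Submodule A A := Submodule.span A (D '' {j | j + 1 < n}) with hIdef
  have hQlist : ∀ l : List ℕ, (∀ i ∈ l, i + 1 < n) → ∀ f ∈ S,
      opProd (l.map δ) f ∈ S ∧
        ∃ e ∈ I, (l.map D).prod * f = opProd (l.map δ) f + e := by
    intro l
    induction l with
    | nil =>
      intro _ f hf
      refine ⟨hf, 0, zero_mem I, ?_⟩
      simp [opProd]
    | cons i l ih =>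
      intro hl f hf
      have hi : i + 1 < n := hl i List.mem_cons_self
      obtain ⟨hmem, e, heI, heq⟩ := ih (fun a ha => hl a (List.mem_cons_of_mem i ha)) f hf
      have hop : opProd ((i :: l).map δ) f = δ i (opProd (l.map δ) f) := rfl
      obtain ⟨hδmem, hDeq⟩ := hkey i hi _ hmem
      refine ⟨hop ▸ hδmem, σ i (opProd (l.map δ) f) * D i + D i * e, ?_, ?_⟩
      · apply add_mem
        · exact Submodule.smul_mem I _ (Submodule.subset_span ⟨i, hi, rfl⟩)
        · exact Submodule.smul_mem I _ heI
      · rw [hop]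
        calc ((List.map D (i :: l)).prod) * f = D i * ((l.map D).prod * f) := by
              simp only [List.map_cons, List.prod_cons, mul_assoc]
          _ = D i * (opProd (l.map δ) f + e) := by rw [heq]
          _ = D i * opProd (l.map δ) f + D i * e := by rw [mul_add]
          _ = δ i (opProd (l.map δ) f) + (σ i (opProd (l.map δ) f) * D i + D i * e) := by
              rw [hDeq]; abel
  -- finish
  have hkill : ∀ e ∈ I, e * ((w0List n).map D).prod = 0 := by
    intro e heI
    induction heI using Submodule.span_induction with
    | mem z hz =>
      obtain ⟨j, hj, rfl⟩ := hz
      exact hA n le_rfl j hj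
    | zero => rw [zero_mul]
    | add a b _ _ ha hb => rw [add_mul, ha, hb, add_zero]
    | smul a z _ hz => rw [smul_eq_mul, mul_assoc, hz, mul_zero]
  intro f hf
  obtain ⟨hmem, e, heI, heq⟩ := hQlist (w0List n) (fun i hi => hw0 n i hi) f hf
  rw [heq, add_mul, hkill e heI, add_zero]
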